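/- Let Q ∈ ℝ^{n×n} be symmetric positive definite, A ∈ ℝ^{n×n}, and write ‖z‖_Q := √(zᵀQz). Suppose r₀ := sup_{x≠0} ‖Ax‖_Q² / ‖x‖_Q² < 1 and let b > 0. Then there exists η > 0 such that for all x, v ∈ ℝⁿ with ‖x‖_Q² ≥ 2b and ‖v‖_Q ≤ η, one has ‖Ax+v‖_Q² − ‖x‖_Q² ≤ −(1−r₀)b. -/

import Mathlib

open Matrix

theorem qvd_aux {E : Type*} [NormedAddCommGroup E] [InnerProductSpace ℝ E]
    [FiniteDimensional ℝ E] (f : E →ₗ[ℝ] E) (b r0 : ℝ) (hb : 0 < b)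
    (hr0 : r0 = sSup {r : ℝ | ∃ x : E, x ≠ 0 ∧
      r = (inner ℝ (f x) (f x) : ℝ) / (inner ℝ x x : ℝ)})
    (hr0lt : r0 < 1) :
    ∃ η : ℝ, 0 < η ∧ ∀ x v : E, 2 * b ≤ (inner ℝ x x : ℝ) →
      Real.sqrt ((inner ℝ v v : ℝ)) ≤ η →
      (inner ℝ (f x + v) (f x + v) : ℝ) - (inner ℝ x x : ℝ) ≤ -((1 - r0) * b) := by
  by_cases hE : ∃ z : E, z ≠ 0
  case neg =>
    push_neg at hE
    refine ⟨1, one_pos, fun x v hx _ => absurd hx ?_⟩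
    rw [hE x]
    simp
    linarith
  obtain ⟨z, hz⟩ := hE
  set S := {r : ℝ | ∃ x : E, x ≠ 0 ∧ r = (inner ℝ (f x) (f x) : ℝ) / (inner ℝ x x : ℝ)} with hS
  set g := LinearMap.toContinuousLinearMap f with hg
  have hgf : ∀ x : E, g x = f x := fun x => rfl
  have hbdd : BddAbove S := by
    refine ⟨‖g‖ ^ 2, fun r hr => ?_⟩
    obtain ⟨x, hx, rfl⟩ := hr
    rw [real_inner_self_eq_norm_sq, real_inner_self_eq_norm_sq]
    have hxp : 0 < ‖x‖ := norm_pos_iff.mpr hx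
    rw [div_le_iff₀ (by positivity)]
    have h1 := g.le_opNorm x
    rw [hgf] at h1
    nlinarith [norm_nonneg (f x), norm_nonneg x, norm_nonneg g]
  have hub : ∀ x : E, ‖f x‖ ^ 2 ≤ r0 * ‖x‖ ^ 2 := by
    intro x
    by_cases hx : x = 0
    · simp [hx]
    · have hmem : (inner ℝ (f x) (f x) : ℝ) / (inner ℝ x x : ℝ) ∈ S := ⟨x, hx, rfl⟩
      have h := le_csSup hbdd hmem
      rw [← hr0] at h
      rw [real_inner_self_eq_norm_sq, real_inner_self_eq_norm_sq] at h
      have hxp : 0 < ‖x‖ := norm_pos_iff.mpr hx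
      rw [div_le_iff₀ (by positivity)] at h
      linarith
  have hr0nn : 0 ≤ r0 := by
    have hmem : (inner ℝ (f z) (f z) : ℝ) / (inner ℝ z z : ℝ) ∈ S := ⟨z, hz, rfl⟩
    have h := le_csSup hbdd hmem
    rw [← hr0] at h
    have h2 : 0 ≤ (inner ℝ (f z) (f z) : ℝ) / (inner ℝ z z : ℝ) :=
      div_nonneg real_inner_self_nonneg real_inner_self_nonneg
    linarith
  set s := Real.sqrt b with hsdef
  have hs0 : 0 < s := Real.sqrt_pos.mpr hb
  have hs2 : s ^ 2 = b := Real.sq_sqrt hb.le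
  have hd : 0 < 1 - r0 := by linarith
  have heta : 0 < (1 - r0) * s / 4 := by
    apply div_pos (mul_pos hd hs0)
    norm_num
  refine ⟨(1 - r0) * s / 4, heta, fun x v hx hv => ?_⟩
  rw [real_inner_self_eq_norm_sq] at hx
  have hv' : ‖v‖ ≤ (1 - r0) * s / 4 := by
    rwa [real_inner_self_eq_norm_sq, Real.sqrt_sq (norm_nonneg v)] at hv
  rw [real_inner_self_eq_norm_sq, real_inner_self_eq_norm_sq]
  have htri : ‖f x + v‖ ≤ ‖f x‖ + ‖v‖ := norm_add_le _ _
  have hfx := hub x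
  have hat : ‖f x‖ ≤ ‖x‖ := by
    nlinarith [norm_nonneg (f x), norm_nonneg x]
  nlinarith [htri, hfx, hat, hx, hv', hs2, hs0.le, norm_nonneg v,
    norm_nonneg (f x + v), norm_nonneg (f x), norm_nonneg x,
    sq_nonneg (‖x‖ - s),
    mul_nonneg (sub_nonneg.mpr hat) (norm_nonneg v),
    mul_nonneg (sub_nonneg.mpr hv') (norm_nonneg x),
    mul_nonneg (sub_nonneg.mpr hv') (by linarith [norm_nonneg v] : (0:ℝ) ≤ (1 - r0) * s / 4 + ‖v‖),
    mul_nonneg (sub_nonneg.mpr htri) (by positivity : (0:ℝ) ≤ ‖f x‖ + ‖v‖ + ‖f x + v‖),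
    mul_nonneg (by nlinarith : (0:ℝ) ≤ ‖x‖^2 - 2*s^2) (by linarith : (0:ℝ) ≤ 1 - r0)]

theorem quadratic_variant_decrease {n : ℕ}
    (Q A : Matrix (Fin n) (Fin n) ℝ) (hQ : Q.PosDef)
    (b : ℝ) (hb : 0 < b) (r0 : ℝ)
    (hr0 : r0 = sSup {r : ℝ | ∃ x : Fin n → ℝ, x ≠ 0 ∧
      r = (A.mulVec x ⬝ᵥ Q.mulVec (A.mulVec x)) / (x ⬝ᵥ Q.mulVec x)})
    (hr0lt : r0 < 1) :
    ∃ η : ℝ, 0 < η ∧ ∀ x v : Fin n → ℝ,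
      2 * b ≤ x ⬝ᵥ Q.mulVec x →
      Real.sqrt (v ⬝ᵥ Q.mulVec v) ≤ η →
      (A.mulVec x + v) ⬝ᵥ Q.mulVec (A.mulVec x + v) - x ⬝ᵥ Q.mulVec x ≤
        -((1 - r0) * b) := by
  letI instN : NormedAddCommGroup (Fin n → ℝ) := Q.toNormedAddCommGroup hQ
  letI instI : @InnerProductSpace ℝ (Fin n → ℝ) _ instN.toSeminormedAddCommGroup := Q.toInnerProductSpace hQ.posSemidef
  have hinner : ∀ x y : Fin n → ℝ,
      (@inner ℝ _ instI.toInner x y : ℝ) = x ⬝ᵥ Q.mulVec y := fun x y => by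
      show (Q *ᵥ y) ⬝ᵥ star x = _; rw [star_trivial, dotProduct_comm]
  have hfd : FiniteDimensional ℝ (Fin n → ℝ) := by infer_instance
  have key := @qvd_aux (Fin n → ℝ) instN instI hfd A.mulVecLin b r0 hb ?_ hr0lt
  · obtain ⟨η, hη, h⟩ := key
    refine ⟨η, hη, fun x v hx hv => ?_⟩
    have := h x v (by rw [hinner]; exact hx) (by rw [hinner]; exact hv)
    rwa [hinner, hinner, A.mulVecLin_apply] at this
  · rw [hr0]
    congr 1
    simp only [hinner, A.mulVecLin_apply]
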